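/- Let λ ∈ [d/(d+1), 1) and let Φ be the homogeneous IFS on ℝ^d with maps S_i(x) = λx + (1−λ)e_i for i = 0, ..., d, where e_0 = 0 and e_1, ..., e_d are the standard basis vectors; its attractor is the simplex X = {x : x_i ≥ 0, Σ x_i ≤ 1}. Then for every x in the interior of X, there exists a finite word a over {0,...,d} such that (T_{a_{|a|}} ∘ ⋯ ∘ T_{a_1})(x) ∈ (0, 1−λ]^d, where T_i(x) = (x − (1−λ)e_i)/λ, and moreover all intermediate images of x remain in X. -/

import Mathlib

/-- for `λ ∈ [d/(d+1), 1)` and the homogeneous IFS on the simplex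
`X = {x : xᵢ ≥ 0, Σ xᵢ ≤ 1}` with fixed points `e_0 = 0, e_1, …, e_d`, every `x` in the
interior of `X` admits a finite word `w` over `{0,…,d}` such that all intermediate images
of `x` under the expanding maps `T_i(y) = (y - (1-λ)e_i)/λ` stay in `X` and the final image
lies in the cube `(0, 1-λ]^d`. -/
theorem greedy_into_cube (d : ℕ) (hd : 1 ≤ d)
    (lam : ℝ) (hlam : lam ∈ Set.Ico ((d : ℝ) / (d + 1)) 1)
    (e : Fin (d + 1) → Fin d → ℝ)
    (he : ∀ i j, e i j = if (i : ℕ) = (j : ℕ) + 1 then 1 else 0)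
    (X : Set (Fin d → ℝ))
    (hXdef : X = {x | (∀ i, 0 ≤ x i) ∧ ∑ i, x i ≤ 1})
    (x : Fin d → ℝ) (hx : x ∈ interior X) :
    ∃ w : List (Fin (d + 1)),
      (∀ l ≤ w.length,
        (w.take l).foldl (fun y i => lam⁻¹ • (y - (1 - lam) • e i)) x ∈ X) ∧
      ∀ j : Fin d,
        (w.foldl (fun y i => lam⁻¹ • (y - (1 - lam) • e i)) x) j ∈ Set.Ioc 0 (1 - lam) := by
  obtain ⟨hlam1, hlam2⟩ := hlam
  have hd0 : (0:ℝ) < d := by exact_mod_cast Nat.lt_of_lt_of_le Nat.zero_lt_one hd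
  have hlam0 : 0 < lam := lt_of_lt_of_le (by positivity) hlam1
  have h1lam : 0 < 1 - lam := by linarith
  -- interior facts
  obtain ⟨ε, hε, hball⟩ := Metric.isOpen_iff.mp isOpen_interior x hx
  have hball' : ∀ y ∈ Metric.ball x ε, (∀ i, 0 ≤ y i) ∧ ∑ i, y i ≤ 1 := by
    intro y hy
    have := interior_subset (hball hy); rwa [hXdef] at this
  have hupd : ∀ (i : Fin d) (c : ℝ), |c| ≤ ε / 2 →
      Function.update x i (x i + c) ∈ Metric.ball x ε := by
    intro i c hc
    rw [Metric.mem_ball]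
    have h2 : dist (Function.update x i (x i + c)) x ≤ ε / 2 := by
      rw [dist_pi_le_iff (by positivity)]
      intro k
      rcases eq_or_ne k i with rfl | h
      · simpa [Function.update_self, Real.dist_eq] using hc
      · simp only [Function.update_of_ne h, dist_self]; positivity
    linarith
  have hpos : ∀ i, 0 < x i := by
    intro i
    have hm := hupd i (-(ε/2)) (by rw [abs_neg]; rw [abs_of_pos (by positivity)])
    have := (hball' _ hm).1 i
    rw [Function.update_self] at this
    linarith
  have hs₀1 : ∑ i, x i < 1 := by
    set i0 : Fin d := ⟨0, hd⟩
    have hm := hupd i0 (ε/2) (by rw [abs_of_pos (by positivity)])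
    have h2 := (hball' _ hm).2
    rw [Finset.sum_update_of_mem (Finset.mem_univ i0), Finset.sdiff_singleton_eq_erase] at h2
    have h3 : x i0 + ∑ k ∈ Finset.univ.erase i0, x k = ∑ i, x i :=
      Finset.add_sum_erase _ _ (Finset.mem_univ i0)
    have hε2 : 0 < ε / 2 := by positivity
    linarith
  set s₀ := ∑ i, x i with hs₀def
  set δ := (1 - lam) * (1 - s₀) / lam with hδdef
  have hδ : 0 < δ := div_pos (mul_pos h1lam (by linarith)) hlam0
  have hδl : δ * lam = (1 - lam) * (1 - s₀) := by
    rw [hδdef, div_mul_cancel₀ _ hlam0.ne']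
  have hmemX : ∀ y : Fin d → ℝ, (∀ i, 0 < y i) → ∑ i, y i ≤ s₀ → y ∈ X := by
    intro y hy hys
    rw [hXdef]
    exact ⟨fun i => (hy i).le, le_trans hys hs₀1.le⟩
  -- finishing case: all coordinates already ≤ 1 - lam
  have done : ∀ y : Fin d → ℝ, (∀ i, 0 < y i) → ∑ i, y i ≤ s₀ → (∀ j, y j ≤ 1 - lam) →
      ∃ w : List (Fin (d + 1)),
        (∀ l ≤ w.length,
          (w.take l).foldl (fun y i => lam⁻¹ • (y - (1 - lam) • e i)) y ∈ X) ∧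
        ∀ j : Fin d,
          (w.foldl (fun y i => lam⁻¹ • (y - (1 - lam) • e i)) y) j ∈ Set.Ioc 0 (1 - lam) := by
    intro y hy hys hall
    refine ⟨[], ?_, ?_⟩
    · intro l hl
      have : l = 0 := Nat.le_zero.mp hl
      subst this
      simpa using hmemX y hy hys
    · intro j
      exact ⟨hy j, hall j⟩
  suffices key : ∀ n : ℕ, ∀ y : Fin d → ℝ, (∀ i, 0 < y i) → ∑ i, y i ≤ s₀ →
      ∑ i, y i ≤ n * δ + (1 - lam) →
      ∃ w : List (Fin (d + 1)),
        (∀ l ≤ w.length,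
          (w.take l).foldl (fun y i => lam⁻¹ • (y - (1 - lam) • e i)) y ∈ X) ∧
        ∀ j : Fin d,
          (w.foldl (fun y i => lam⁻¹ • (y - (1 - lam) • e i)) y) j ∈ Set.Ioc 0 (1 - lam) by
    obtain ⟨n, hn⟩ := exists_nat_ge (s₀ / δ)
    have hns : s₀ ≤ n * δ := by
      rw [div_le_iff₀ hδ] at hn
      linarith
    exact key n x hpos le_rfl (by linarith)
  intro n
  induction n with
  | zero =>
    intro y hy hys hyn
    refine done y hy hys fun j => ?_
    have h1 : y j ≤ ∑ i, y i :=
      Finset.single_le_sum (fun i _ => (hy i).le) (Finset.mem_univ j)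
    simp only [Nat.cast_zero, zero_mul, zero_add] at hyn
    linarith
  | succ n ih =>
    intro y hy hys hyn
    by_cases hall : ∀ j, y j ≤ 1 - lam
    · exact done y hy hys hall
    · push_neg at hall
      obtain ⟨j, hj⟩ := hall
      set y' : Fin d → ℝ := lam⁻¹ • (y - (1 - lam) • e j.succ) with hy'def
      have hej : ∀ k, e j.succ k = if k = j then 1 else 0 := by
        intro k
        rw [he, Fin.val_succ]
        by_cases h : k = j
        · subst h; simp
        · rw [if_neg h, if_neg]
          intro hc
          exact h (Fin.ext (by omega))
      have hcoord : ∀ k, y' k = lam⁻¹ * (y k - if k = j then 1 - lam else 0) := by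
        intro k
        simp only [hy'def, Pi.smul_apply, Pi.sub_apply, smul_eq_mul, hej]
        by_cases h : k = j <;> simp [h]
      have hsum' : ∑ k, y' k = lam⁻¹ * ((∑ k, y k) - (1 - lam)) := by
        simp only [hcoord]
        rw [← Finset.mul_sum, Finset.sum_sub_distrib]
        congr 2
        simp
      have hy'pos : ∀ k, 0 < y' k := by
        intro k
        rw [hcoord]
        apply mul_pos (inv_pos.mpr hlam0)
        by_cases h : k = j
        · subst h; rw [if_pos rfl]; linarith
        · rw [if_neg h]; simpa using hy k
      have hstep : ∑ k, y' k ≤ (∑ k, y k) - δ := by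
        rw [hsum']
        rw [inv_mul_le_iff₀ hlam0]
        nlinarith [mul_nonneg h1lam.le (sub_nonneg.mpr hys)]
      have hys' : ∑ k, y' k ≤ s₀ := by linarith
      have hyn' : ∑ k, y' k ≤ n * δ + (1 - lam) := by
        push_cast at hyn ⊢
        linarith
      obtain ⟨w', hw1, hw2⟩ := ih y' hy'pos hys' hyn'
      refine ⟨j.succ :: w', ?_, ?_⟩
      · intro l hl
        cases l with
        | zero => simpa using hmemX y hy hys
        | succ l =>
          rw [List.take_succ_cons, List.foldl_cons]
          exact hw1 l (by simpa using hl)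
      · intro k
        rw [List.foldl_cons]
        exact hw2 k
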